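/- For 2 ≤ k ≤ n−1 and n−k ≤ h ≤ n−2, the h-super edge-connectivity of the (n,k)-star graph satisfies λ_s^{(h)}(S_{n,k}) ≤ (h+1)!(n−h−1)/(n−k)!. -/

import Mathlib

open SimpleGraph

/-- `q` is a swap-neighbor of `p` in the (n,k)-star graph: it is obtained from `p`
by swapping the first digit with the `i`-th digit for some `i ≠ 0`. -/
def swapAdj {n k : ℕ} [NeZero k] (p q : Fin k ↪ Fin n) : Prop :=
  ∃ i : Fin k, i ≠ 0 ∧ q 0 = p i ∧ q i = p 0 ∧
    ∀ j : Fin k, j ≠ 0 → j ≠ i → q j = p j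

/-- `q` is an unswap-neighbor of `p`: obtained by replacing the first digit of `p`
by a symbol not occurring in `p`. -/
def unswapAdj {n k : ℕ} [NeZero k] (p q : Fin k ↪ Fin n) : Prop :=
  (∀ j : Fin k, j ≠ 0 → q j = p j) ∧ ∀ j : Fin k, q 0 ≠ p j

/-- The (n,k)-star graph `S_{n,k}` on the k-arrangements of an n-set. -/
def nkStar (n k : ℕ) [NeZero k] : SimpleGraph (Fin k ↪ Fin n) :=
  SimpleGraph.fromRel (fun p q => swapAdj p q ∨ unswapAdj p q)

/-- The n-dimensional star graph `S_n` on permutations, adjacency by swapping the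
first digit with the `i`-th digit, `i ≠ 0`. -/
def starGraph (n : ℕ) [NeZero n] : SimpleGraph (Equiv.Perm (Fin n)) :=
  SimpleGraph.fromRel (fun p q => ∃ i : Fin n, i ≠ 0 ∧ q = p * Equiv.swap 0 i)

/-- `T` is an h-vertex-cut: `G - T` is disconnected and has minimum degree at least `h`. -/
def IsHVertexCut {V : Type*} (G : SimpleGraph V) (h : ℕ) (T : Set V) : Prop :=
  ¬ (G.induce Tᶜ).Connected ∧ ∀ v, v ∉ T → h ≤ (G.neighborSet v \ T).ncard

/-- The h-super connectivity `κ_s^{(h)}(G)`. -/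
noncomputable def kappaS {V : Type*} (G : SimpleGraph V) (h : ℕ) : ℕ :=
  sInf {m | ∃ T : Set V, IsHVertexCut G h T ∧ T.ncard = m}

/-- `F` is an h-edge-cut: `G - F` is disconnected and has minimum degree at least `h`. -/
def IsHEdgeCut {V : Type*} (G : SimpleGraph V) (h : ℕ) (F : Set (Sym2 V)) : Prop :=
  F ⊆ G.edgeSet ∧ ¬ (G.deleteEdges F).Connected ∧
    ∀ v : V, h ≤ ((G.deleteEdges F).neighborSet v).ncard

/-- The h-super edge-connectivity `λ_s^{(h)}(G)`. -/
noncomputable def lambdaS {V : Type*} (G : SimpleGraph V) (h : ℕ) : ℕ :=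
  sInf {m | ∃ F : Set (Sym2 V), IsHEdgeCut G h F ∧ F.ncard = m}

/-- `G'` together with the projection `π` is a `t`-split graph of `G`: fibers of `π`
have size `t` and are independent, `π` is a graph homomorphism, and over each edge of
`G` the edges of `G'` form a perfect matching between the two fibers. -/
structure IsSplitGraph {V W : Type*} (G : SimpleGraph V) (t : ℕ)
    (G' : SimpleGraph W) (π : W → V) : Prop where
  fiber_card : ∀ v : V, Nat.card (π ⁻¹' {v}) = t
  indep : ∀ x y : W, π x = π y → ¬ G'.Adj x y
  adj_map : ∀ x y : W, G'.Adj x y → G.Adj (π x) (π y)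
  matching : ∀ (x : W) (v : V), G.Adj (π x) v → ∃! z : W, π z = v ∧ G'.Adj x z

/-- The prefix map sending a permutation of `{1,...,n}` to its length-`k` prefix. -/
def prefixMap (n k : ℕ) (hkn : k ≤ n) (p : Equiv.Perm (Fin n)) : Fin k ↪ Fin n :=
  (Fin.castLEEmb hkn).trans p.toEmbedding

/-- The set `X` of k-arrangements whose last `n-1-h` digits are `1,2,...,n-1-h` in order. -/
def lastFixed (n k h : ℕ) : Set (Fin k ↪ Fin n) :=
  {u | ∀ i : Fin k, k - (n - 1 - h) ≤ i.val → (u i).val = i.val - (k - (n - 1 - h))}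

set_option linter.unusedSectionVars false
set_option linter.unusedVariables false

namespace NKAux

variable {n k : ℕ} [NeZero k]

/-- Swap the symbols at positions 0 and i. -/
def swapEmb (v : Fin k ↪ Fin n) (i : Fin k) : Fin k ↪ Fin n :=
  (Equiv.swap 0 i).toEmbedding.trans v

lemma swapEmb_zero (v : Fin k ↪ Fin n) (i : Fin k) : swapEmb v i 0 = v i := by
  simp [swapEmb, Equiv.swap_apply_left]

lemma swapEmb_same (v : Fin k ↪ Fin n) (i : Fin k) : swapEmb v i i = v 0 := by
  simp [swapEmb, Equiv.swap_apply_right]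

lemma swapEmb_other (v : Fin k ↪ Fin n) (i : Fin k) {j : Fin k} (hj0 : j ≠ 0) (hji : j ≠ i) :
    swapEmb v i j = v j := by
  simp [swapEmb, Equiv.swap_apply_of_ne_of_ne hj0 hji]

/-- Replace the first symbol by an unused symbol `a`. -/
def unswapEmb (v : Fin k ↪ Fin n) (a : Fin n) (ha : ∀ j, a ≠ v j) : Fin k ↪ Fin n :=
  ⟨fun j => if j = 0 then a else v j, by
    intro j1 j2 hj
    by_cases h1 : j1 = 0 <;> by_cases h2 : j2 = 0 <;> simp [h1, h2] at hj ⊢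
    · exact absurd hj (ha j2)
    · exact absurd hj.symm (ha j1)
    · exact hj⟩

lemma unswapEmb_zero (v : Fin k ↪ Fin n) (a ha) : unswapEmb v a ha 0 = a := rfl

lemma unswapEmb_other (v : Fin k ↪ Fin n) (a ha) {j : Fin k} (hj : j ≠ 0) :
    unswapEmb v a ha j = v j := by show (if j = 0 then a else v j) = v j; rw [if_neg hj]

lemma nkStar_adj {p q : Fin k ↪ Fin n} :
    (nkStar n k).Adj p q ↔ p ≠ q ∧
      ((swapAdj p q ∨ unswapAdj p q) ∨ (swapAdj q p ∨ unswapAdj q p)) := by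
  simp [nkStar, fromRel_adj]

lemma adj_swapEmb (v : Fin k ↪ Fin n) {i : Fin k} (hi : i ≠ 0) :
    (nkStar n k).Adj v (swapEmb v i) := by
  rw [nkStar_adj]
  constructor
  · intro hvq
    have h0 : v 0 = swapEmb v i 0 := by rw [← hvq]
    rw [swapEmb_zero] at h0
    exact hi (v.injective h0).symm
  · exact Or.inl (Or.inl ⟨i, hi, swapEmb_zero v i, swapEmb_same v i,
      fun j hj0 hji => swapEmb_other v i hj0 hji⟩)

lemma adj_unswapEmb (v : Fin k ↪ Fin n) (a : Fin n) (ha : ∀ j, a ≠ v j) :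
    (nkStar n k).Adj v (unswapEmb v a ha) := by
  rw [nkStar_adj]
  constructor
  · intro hvq
    have h0 : v 0 = unswapEmb v a ha 0 := by rw [← hvq]
    rw [unswapEmb_zero] at h0
    exact ha 0 h0.symm
  · exact Or.inl (Or.inr ⟨fun j hj => unswapEmb_other v a ha hj,
      fun j => by rw [unswapEmb_zero]; exact ha j⟩)

/-- Classification of neighbors. -/
lemma adj_cases {p q : Fin k ↪ Fin n} (hpq : (nkStar n k).Adj p q) :
    (∃ i : Fin k, i ≠ 0 ∧ q = swapEmb p i) ∨ (∀ j : Fin k, j ≠ 0 → q j = p j) := by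
  rw [nkStar_adj] at hpq
  obtain ⟨-, h⟩ := hpq
  rcases h with (⟨i, hi, h0, hii, hrest⟩ | hu) | (⟨i, hi, h0, hii, hrest⟩ | hu)
  · refine Or.inl ⟨i, hi, ?_⟩
    apply Function.Embedding.ext
    intro j
    by_cases hj0 : j = 0
    · subst hj0; rw [h0, swapEmb_zero]
    · by_cases hji : j = i
      · subst hji; rw [hii, swapEmb_same]
      · rw [hrest j hj0 hji, swapEmb_other p i hj0 hji]
  · exact Or.inr hu.1
  · refine Or.inl ⟨i, hi, ?_⟩
    apply Function.Embedding.ext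
    intro j
    by_cases hj0 : j = 0
    · subst hj0; rw [← hii, swapEmb_zero]
    · by_cases hji : j = i
      · subst hji; rw [← h0, swapEmb_same]
      · rw [← hrest j hj0 hji, swapEmb_other p i hj0 hji]
  · exact Or.inr (fun j hj => (hu.1 j hj).symm)

end NKAux

/-- The set of edges joining `lastFixed n k h` with its complement. -/
def crossF (n k h : ℕ) [NeZero k] : Set (Sym2 (Fin k ↪ Fin n)) :=
  {e | e ∈ (nkStar n k).edgeSet ∧
    ∃ a b : Fin k ↪ Fin n, a ∈ lastFixed n k h ∧ b ∉ lastFixed n k h ∧ e = s(a, b)}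

namespace NKAux

variable {n k h : ℕ} [NeZero k]

lemma mem_lastFixed {u : Fin k ↪ Fin n} :
    u ∈ lastFixed n k h ↔
      ∀ i : Fin k, k - (n - 1 - h) ≤ i.val → (u i).val = i.val - (k - (n - 1 - h)) :=
  Iff.rfl

lemma crossF_subset_edgeSet : crossF n k h ⊆ (nkStar n k).edgeSet := fun _ he => he.1

lemma crossF_mem {v w : Fin k ↪ Fin n} (hv : v ∈ lastFixed n k h)
    (hw : w ∉ lastFixed n k h) (hadj : (nkStar n k).Adj v w) :
    s(v, w) ∈ crossF n k h :=
  ⟨(mem_edgeSet _).2 hadj, v, w, hv, hw, rfl⟩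

lemma crossF_not_mem_in {v w : Fin k ↪ Fin n} (hv : v ∈ lastFixed n k h)
    (hw : w ∈ lastFixed n k h) : s(v, w) ∉ crossF n k h := by
  rintro ⟨-, a, b, ha, hb, heq⟩
  rw [Sym2.eq_iff] at heq
  rcases heq with ⟨rfl, rfl⟩ | ⟨rfl, rfl⟩
  · exact hb hw
  · exact hb hv

lemma crossF_not_mem_out {v w : Fin k ↪ Fin n} (hv : v ∉ lastFixed n k h)
    (hw : w ∉ lastFixed n k h) : s(v, w) ∉ crossF n k h := by
  rintro ⟨-, a, b, ha, hb, heq⟩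
  rw [Sym2.eq_iff] at heq
  rcases heq with ⟨rfl, rfl⟩ | ⟨rfl, rfl⟩
  · exact hv ha
  · exact hw ha

/-- Swapping with a first-block position preserves membership in `lastFixed`. -/
lemma swapEmb_mem (hm : 1 ≤ n - 1 - h) {v : Fin k ↪ Fin n} (hv : v ∈ lastFixed n k h)
    {i : Fin k} (hi : i.val < k - (n - 1 - h)) : swapEmb v i ∈ lastFixed n k h := by
  intro p hp
  rw [swapEmb_other v i (by intro h0; rw [h0] at hp; simp at hp; omega)
    (by intro hpi; rw [hpi] at hp; omega)]
  exact hv p hp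

/-- Swapping with a last-block position destroys membership in `lastFixed`. -/
lemma swapEmb_not_mem {v : Fin k ↪ Fin n} (hv : v ∈ lastFixed n k h)
    {i : Fin k} (hi : k - (n - 1 - h) ≤ i.val) (hi0 : i ≠ 0) :
    swapEmb v i ∉ lastFixed n k h := by
  intro hmem
  have h1 := hmem i hi
  rw [swapEmb_same] at h1
  have h2 := hv i hi
  have : v 0 = v i := Fin.ext (by omega)
  exact hi0 (v.injective this).symm

/-- Replacing the first symbol preserves membership in `lastFixed` (both ways). -/
lemma unswapEmb_mem_iff (hm : 1 ≤ k - (n - 1 - h)) {v : Fin k ↪ Fin n} (a ha) :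
    unswapEmb v a ha ∈ lastFixed n k h ↔ v ∈ lastFixed n k h := by
  constructor <;> intro hmem <;> intro p hp
  · have := hmem p hp
    rwa [unswapEmb_other v a ha (by intro h0; rw [h0] at hp; simp at hp; omega)] at this
  · rw [unswapEmb_other v a ha (by intro h0; rw [h0] at hp; simp at hp; omega)]
    exact hmem p hp

end NKAux

namespace NKAux

variable {n k h : ℕ} [NeZero k]

/-- Generic degree lower bound in the graph with a set of edges deleted. -/
lemma degree_lower (F : Set (Sym2 (Fin k ↪ Fin n))) (v : Fin k ↪ Fin n)
    (P : Set (Fin k ↪ Fin n))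
    (hF : ∀ w, w ∈ P → s(v, w) ∉ F)
    (I : Finset (Fin k)) (hI0 : ∀ i ∈ I, i ≠ 0)
    (hIs : ∀ i ∈ I, swapEmb v i ∈ P)
    (hU : ∀ (a : Fin n) (ha : ∀ j, a ≠ v j), unswapEmb v a ha ∈ P) :
    I.card + (n - k) ≤ (((nkStar n k).deleteEdges F).neighborSet v).ncard := by
  classical
  set U : Finset (Fin n) := (Finset.univ.image ⇑v)ᶜ with hU_def
  have hU_mem : ∀ a ∈ U, ∀ j, a ≠ v j := by
    intro a haU j hav
    rw [hU_def, Finset.mem_compl] at haU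
    exact haU (Finset.mem_image.2 ⟨j, Finset.mem_univ j, hav.symm⟩)
  set s1 : Finset (Fin k ↪ Fin n) := I.image (swapEmb v) with hs1_def
  set s2 : Finset (Fin k ↪ Fin n) :=
    U.attach.image (fun a => unswapEmb v a.1 (hU_mem a.1 a.2)) with hs2_def
  have hs1card : s1.card = I.card := by
    rw [hs1_def]
    apply Finset.card_image_of_injOn
    intro i1 h1 i2 h2 heq
    by_contra hne
    have e1 : swapEmb v i1 i1 = v 0 := swapEmb_same v i1
    have e2 : swapEmb v i2 i1 = v i1 := swapEmb_other v i2 (hI0 i1 h1) hne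
    rw [heq] at e1
    rw [e1] at e2
    exact hI0 i1 h1 (v.injective e2).symm
  have hs2card : s2.card = n - k := by
    rw [hs2_def]
    rw [Finset.card_image_of_injective _ ?_]
    · rw [Finset.card_attach, hU_def, Finset.card_compl,
        Finset.card_image_of_injective _ v.injective]
      simp
    · intro a1 a2 heq
      have := congrArg (fun f : Fin k ↪ Fin n => f 0) heq
      simp only [unswapEmb_zero] at this
      exact Subtype.ext this
  have hdisj : Disjoint s1 s2 := by
    rw [Finset.disjoint_left]
    intro w hw1 hw2
    rw [hs1_def, Finset.mem_image] at hw1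
    rw [hs2_def, Finset.mem_image] at hw2
    obtain ⟨i, hi, rfl⟩ := hw1
    obtain ⟨a, ha, heq⟩ := hw2
    have h0 : unswapEmb v a.1 (hU_mem a.1 a.2) 0 = swapEmb v i 0 := by rw [heq]
    rw [unswapEmb_zero, swapEmb_zero] at h0
    exact hU_mem a.1 a.2 i h0
  have hsub : ↑(s1 ∪ s2) ⊆ ((nkStar n k).deleteEdges F).neighborSet v := by
    intro w hw
    rw [Finset.coe_union, Set.mem_union] at hw
    rw [mem_neighborSet, deleteEdges_adj]
    rcases hw with hw | hw
    · rw [Finset.mem_coe, hs1_def, Finset.mem_image] at hw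
      obtain ⟨i, hi, rfl⟩ := hw
      exact ⟨adj_swapEmb v (hI0 i hi), hF _ (hIs i hi)⟩
    · rw [Finset.mem_coe, hs2_def, Finset.mem_image] at hw
      obtain ⟨a, ha, rfl⟩ := hw
      exact ⟨adj_unswapEmb v a.1 (hU_mem a.1 a.2), hF _ (hU a.1 (hU_mem a.1 a.2))⟩
  calc I.card + (n - k) = (s1 ∪ s2).card := by
        rw [Finset.card_union_of_disjoint hdisj, hs1card, hs2card]
    _ = (↑(s1 ∪ s2) : Set (Fin k ↪ Fin n)).ncard := (Set.ncard_coe_finset _).symm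
    _ ≤ _ := Set.ncard_le_ncard hsub (Set.toFinite _)

end NKAux

namespace NKAux

variable {n k h : ℕ} [NeZero k]

/-- First-block values of an element of `lastFixed` are at least `n - 1 - h`. -/
lemma first_block_lower (hkn : k ≤ n) {v : Fin k ↪ Fin n} (hv : v ∈ lastFixed n k h)
    {j : Fin k} (hj : j.val < k - (n - 1 - h)) : n - 1 - h ≤ (v j).val := by
  by_contra hlt
  push_neg at hlt
  have hik : (v j).val + (k - (n - 1 - h)) < k := by omega
  set i : Fin k := ⟨(v j).val + (k - (n - 1 - h)), hik⟩ with hi_def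
  have hvi := hv i (by simp [hi_def])
  have : v i = v j := Fin.ext (by simp [hi_def] at hvi ⊢; omega)
  have := v.injective this
  rw [hi_def] at this
  have := congrArg Fin.val this
  simp at this
  omega

/-- Cardinality bound for `lastFixed`. -/
lemma card_lastFixed_le (hkn : k ≤ n) (hT : k - (n - 1 - h) ≤ k) (hTn : k - (n - 1 - h) ≤ n)
    (hhn : h + 1 ≤ n) :
    (lastFixed n k h).ncard ≤ (h + 1).descFactorial (k - (n - 1 - h)) := by
  classical
  set T := k - (n - 1 - h) with hT_def
  set m := n - 1 - h with hm_def
  -- the key injection into `Fin T ↪ Fin (h+1)`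
  have hval : ∀ (v : lastFixed n k h) (j : Fin T),
      m ≤ ((v : Fin k ↪ Fin n) (Fin.castLE hT j)).val ∧
        ((v : Fin k ↪ Fin n) (Fin.castLE hT j)).val - m < h + 1 := by
    intro v j
    have hlow := first_block_lower hkn v.2 (j := Fin.castLE hT j) (by exact j.2)
    have hup : ((v : Fin k ↪ Fin n) (Fin.castLE hT j)).val < n := Fin.is_lt _
    exact ⟨hlow, by omega⟩
  set φ : lastFixed n k h → (Fin T ↪ Fin (h + 1)) := fun v =>
    ⟨fun j => ⟨((v : Fin k ↪ Fin n) (Fin.castLE hT j)).val - m, (hval v j).2⟩, by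
      intro j1 j2 hj
      have h1 := (hval v j1).1
      have h2 := (hval v j2).1
      rw [Fin.mk.injEq] at hj
      have : (v : Fin k ↪ Fin n) (Fin.castLE hT j1) = (v : Fin k ↪ Fin n) (Fin.castLE hT j2) :=
        Fin.ext (by omega)
      have := (v : Fin k ↪ Fin n).injective this
      exact Fin.ext (by simpa [Fin.ext_iff] using this)⟩ with hφ_def
  have hφinj : Function.Injective φ := by
    intro v1 v2 heq
    apply Subtype.ext
    apply Function.Embedding.ext
    intro i
    by_cases hiT : i.val < T
    · have := DFunLike.congr_fun heq ⟨i.val, hiT⟩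
      rw [hφ_def] at this
      simp only [Function.Embedding.coeFn_mk, Fin.mk.injEq] at this
      have e1 : Fin.castLE hT (⟨i.val, hiT⟩ : Fin T) = i := Fin.ext rfl
      have this : ((v1 : Fin k ↪ Fin n) (Fin.castLE hT ⟨i.val, hiT⟩)).val - m =
          ((v2 : Fin k ↪ Fin n) (Fin.castLE hT ⟨i.val, hiT⟩)).val - m := congrArg Fin.val this
      rw [e1] at this
      have l1 := first_block_lower hkn v1.2 (j := i) hiT
      have l2 := first_block_lower hkn v2.2 (j := i) hiT
      exact Fin.ext (by omega)
    · have e1 := v1.2 i (by omega)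
      have e2 := v2.2 i (by omega)
      exact Fin.ext (by rw [e1, e2])
  have : (lastFixed n k h).ncard = Nat.card (lastFixed n k h) :=
    (Nat.card_coe_set_eq _).symm
  rw [this]
  calc Nat.card (lastFixed n k h) ≤ Nat.card (Fin T ↪ Fin (h + 1)) :=
        Nat.card_le_card_of_injective φ hφinj
    _ = (h + 1).descFactorial T := by
        rw [Nat.card_eq_fintype_card, Fintype.card_embedding_eq]
        simp

end NKAux

namespace NKAux

variable {n k h : ℕ} [NeZero k]

/-- Every edge of `crossF` goes from a vertex of `lastFixed` via a last-block swap. -/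
lemma crossF_subset_image (hm : 1 ≤ n - 1 - h) (hT : 1 ≤ k - (n - 1 - h)) :
    crossF n k h ⊆
      (fun p : (Fin k ↪ Fin n) × Fin k => s(p.1, swapEmb p.1 p.2)) ''
        ((lastFixed n k h) ×ˢ {i : Fin k | k - (n - 1 - h) ≤ i.val}) := by
  rintro e ⟨he, a, b, ha, hb, rfl⟩
  have hadj : (nkStar n k).Adj a b := (mem_edgeSet _).1 he
  rcases adj_cases hadj with ⟨i, hi0, rfl⟩ | hsame
  · by_cases hiT : i.val < k - (n - 1 - h)
    · exact absurd (swapEmb_mem hm ha hiT) hb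
    · refine ⟨(a, i), ⟨ha, ?_⟩, rfl⟩
      simp only [Set.mem_setOf_eq]
      omega
  · exfalso
    apply hb
    intro p hp
    rw [hsame p (by intro h0; rw [h0] at hp; simp at hp; omega)]
    exact ha p hp

lemma ncard_crossF_le (hm : 1 ≤ n - 1 - h) (hT : 1 ≤ k - (n - 1 - h)) :
    (crossF n k h).ncard ≤ (lastFixed n k h).ncard * (n - 1 - h) := by
  classical
  set L : Set (Fin k) := {i : Fin k | k - (n - 1 - h) ≤ i.val} with hL_def
  have hLcard : L.ncard ≤ n - 1 - h := by
    set m := n - 1 - h with hm_def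
    set f : Fin k → Fin m := fun i => ⟨min (i.val - (k - m)) (m - 1), by omega⟩ with hf_def
    have hinj : Set.InjOn f L := by
      intro i1 h1 i2 h2 heq
      rw [hL_def, Set.mem_setOf_eq] at h1 h2
      rw [hf_def, Fin.mk.injEq] at heq
      have b1 : i1.val < k := i1.2
      have b2 : i2.val < k := i2.2
      exact Fin.ext (by omega)
    calc L.ncard = (f '' L).ncard := (Set.ncard_image_of_injOn hinj).symm
      _ ≤ (Set.univ : Set (Fin m)).ncard :=
          Set.ncard_le_ncard (Set.subset_univ _) (Set.toFinite _)
      _ = m := by rw [Set.ncard_univ, Nat.card_eq_fintype_card, Fintype.card_fin]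
  calc (crossF n k h).ncard
      ≤ ((fun p : (Fin k ↪ Fin n) × Fin k => s(p.1, swapEmb p.1 p.2)) ''
          ((lastFixed n k h) ×ˢ L)).ncard :=
        Set.ncard_le_ncard (crossF_subset_image hm hT) (Set.toFinite _)
    _ ≤ ((lastFixed n k h) ×ˢ L).ncard := Set.ncard_image_le (Set.toFinite _)
    _ = (lastFixed n k h).ncard * L.ncard := by
        rw [Set.ncard_eq_toFinset_card', Set.ncard_eq_toFinset_card',
          Set.ncard_eq_toFinset_card', Set.toFinset_prod, Finset.card_product]
    _ ≤ (lastFixed n k h).ncard * (n - 1 - h) := Nat.mul_le_mul_left _ hLcard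

/-- Reachability in the graph minus `crossF` preserves membership in `lastFixed`. -/
lemma reach_invar (hm : 1 ≤ k - (n - 1 - h)) {a b : Fin k ↪ Fin n}
    (hr : ((nkStar n k).deleteEdges (crossF n k h)).Reachable a b)
    (ha : a ∈ lastFixed n k h) : b ∈ lastFixed n k h := by
  obtain ⟨p⟩ := hr
  induction p with
  | nil => exact ha
  | cons hadj p ih =>
    rename_i u c d hcd
    rw [deleteEdges_adj] at hadj
    apply ih
    by_contra hc
    exact hadj.2 (crossF_mem ha hc hadj.1)

end NKAux

namespace NKAux

variable {n k h : ℕ} [NeZero k]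

lemma main (hk2 : 2 ≤ k) (hk : k ≤ n - 1) (h1 : n - k ≤ h) (h2 : h ≤ n - 2) :
    lambdaS (nkStar n k) h ≤ (h + 1).factorial * (n - h - 1) / (n - k).factorial := by
  classical
  have hn3 : 3 ≤ n := by omega
  have hkn : k ≤ n := by omega
  have hm1 : 1 ≤ n - 1 - h := by omega
  have hT1 : 1 ≤ k - (n - 1 - h) := by omega
  have hTk : k - (n - 1 - h) < k := by omega
  have hTmk : k - (n - 1 - h) + (n - 1 - h) = k := by omega
  -- the base vertex u0 ∈ lastFixed
  set u0f : Fin k → Fin n := fun j =>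
    if hj : j.val < k - (n - 1 - h) then ⟨j.val + (n - 1 - h), by omega⟩
    else ⟨j.val - (k - (n - 1 - h)), by omega⟩ with hu0f
  have hinj : Function.Injective u0f := by
    intro j1 j2 hj
    have b1 := j1.isLt
    have b2 := j2.isLt
    simp only [hu0f] at hj
    apply Fin.ext
    by_cases c1 : j1.val < k - (n - 1 - h) <;> by_cases c2 : j2.val < k - (n - 1 - h)
    · rw [dif_pos c1, dif_pos c2, Fin.mk.injEq] at hj; omega
    · rw [dif_pos c1, dif_neg c2, Fin.mk.injEq] at hj; omega
    · rw [dif_neg c1, dif_pos c2, Fin.mk.injEq] at hj; omega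
    · rw [dif_neg c1, dif_neg c2, Fin.mk.injEq] at hj; omega
  set u0 : Fin k ↪ Fin n := ⟨u0f, hinj⟩ with hu0
  have hu0X : u0 ∈ lastFixed n k h := by
    intro i hi
    show (u0f i).val = _
    rw [hu0f]
    simp only [dif_neg (by omega : ¬ i.val < k - (n - 1 - h))]
  set iT : Fin k := ⟨k - (n - 1 - h), hTk⟩ with hiT
  have hiT0 : iT ≠ 0 := by
    intro hh
    have := congrArg Fin.val hh
    simp [hiT] at this
    omega
  have hw0 : swapEmb u0 iT ∉ lastFixed n k h :=
    swapEmb_not_mem hu0X (by simp [hiT]) hiT0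
  -- crossF is an h-edge-cut
  have hcut : IsHEdgeCut (nkStar n k) h (crossF n k h) := by
    refine ⟨crossF_subset_edgeSet, ?_, ?_⟩
    · intro hc
      exact hw0 (reach_invar hT1 (hc.preconnected u0 (swapEmb u0 iT)) hu0X)
    · intro v
      by_cases hvX : v ∈ lastFixed n k h
      · -- v inside: use first-block swaps and unswaps
        set I : Finset (Fin k) :=
          Finset.image (fun j : Fin (k - (n - 1 - h) - 1) => (⟨j.val + 1, by
            have := j.isLt; omega⟩ : Fin k)) Finset.univ with hI_def
        have hIcard : I.card = k - (n - 1 - h) - 1 := by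
          rw [hI_def, Finset.card_image_of_injective _ ?_, Finset.card_univ, Fintype.card_fin]
          intro j1 j2 hj
          have := congrArg Fin.val hj
          simp at this
          exact Fin.ext this
        have hImem : ∀ i ∈ I, i ≠ 0 ∧ i.val < k - (n - 1 - h) := by
          intro i hi
          rw [hI_def, Finset.mem_image] at hi
          obtain ⟨j, -, rfl⟩ := hi
          have := j.isLt
          constructor
          · intro hh
            have := congrArg Fin.val hh
            simp at this
          · simp; omega
        have hdeg := degree_lower (crossF n k h) v (lastFixed n k h)
          (fun w hw => crossF_not_mem_in hvX hw) I (fun i hi => (hImem i hi).1)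
          (fun i hi => swapEmb_mem hm1 hvX (hImem i hi).2)
          (fun a ha => (unswapEmb_mem_iff hT1 a ha).2 hvX)
        rw [hIcard] at hdeg
        exact le_trans (by omega) hdeg
      · -- v outside: avoid the bad position i0
        have hvX' := hvX
        rw [mem_lastFixed] at hvX'
        push_neg at hvX'
        obtain ⟨i0, hi0T, hi0v⟩ := hvX'
        have hi00 : i0 ≠ 0 := by
          intro hh
          rw [hh] at hi0T
          simp at hi0T
          omega
        set I : Finset (Fin k) := ({0, i0} : Finset (Fin k))ᶜ with hI_def
        have hIcard : I.card = k - 2 := by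
          rw [hI_def, Finset.card_compl, Finset.card_insert_of_notMem
            (by simp [Ne.symm hi00]), Finset.card_singleton, Fintype.card_fin]
        have hImem : ∀ i ∈ I, i ≠ 0 ∧ i ≠ i0 := by
          intro i hi
          rw [hI_def, Finset.mem_compl, Finset.mem_insert, Finset.mem_singleton] at hi
          push_neg at hi
          exact hi
        have hdeg := degree_lower (crossF n k h) v ((lastFixed n k h)ᶜ)
          (fun w hw => crossF_not_mem_out hvX hw) I (fun i hi => (hImem i hi).1)
          (fun i hi hmem => by
            have := hmem i0 hi0T
            rw [swapEmb_other v i hi00 (Ne.symm (hImem i hi).2)] at this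
            exact hi0v this)
          (fun a ha hmem => by
            have := hmem i0 hi0T
            rw [unswapEmb_other v a ha hi00] at this
            exact hi0v this)
        rw [hIcard] at hdeg
        exact le_trans (by omega) hdeg
  -- conclude
  have hsinf : lambdaS (nkStar n k) h ≤ (crossF n k h).ncard :=
    Nat.sInf_le ⟨crossF n k h, hcut, rfl⟩
  have hcard : (crossF n k h).ncard ≤
      (h + 1).descFactorial (k - (n - 1 - h)) * (n - 1 - h) :=
    le_trans (ncard_crossF_le hm1 hT1)
      (Nat.mul_le_mul_right _ (card_lastFixed_le hkn (by omega) (by omega) (by omega)))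
  have harith : (h + 1).descFactorial (k - (n - 1 - h)) * (n - 1 - h)
      = (h + 1).factorial * (n - h - 1) / (n - k).factorial := by
    rw [Nat.descFactorial_eq_div (by omega : k - (n - 1 - h) ≤ h + 1)]
    rw [show h + 1 - (k - (n - 1 - h)) = n - k by omega]
    have hdvd : (n - k).factorial ∣ (h + 1).factorial :=
      Nat.factorial_dvd_factorial (by omega)
    calc (h + 1).factorial / (n - k).factorial * (n - 1 - h)
        = (h + 1).factorial / (n - k).factorial * ((n - 1 - h) / 1) := by rw [Nat.div_one]
      _ = (h + 1).factorial * (n - 1 - h) / ((n - k).factorial * 1) :=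
          Nat.div_mul_div_comm hdvd (one_dvd _)
      _ = (h + 1).factorial * (n - h - 1) / (n - k).factorial := by
          rw [mul_one, show n - 1 - h = n - h - 1 by omega]
  omega

end NKAux


/-- λ_s^{(h)}(S_{n,k}) ≤ (h+1)!(n-h-1)/(n-k)! for
2 ≤ k ≤ n-1 and n-k ≤ h ≤ n-2. -/
theorem lambda_upper (n k h : ℕ) (hk2 : 2 ≤ k) (hk : k ≤ n - 1)
    (h1 : n - k ≤ h) (h2 : h ≤ n - 2) :
    lambdaS (@nkStar n k ⟨by omega⟩) h
      ≤ (h + 1).factorial * (n - h - 1) / (n - k).factorial := by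
  have : NeZero k := ⟨by omega⟩
  exact NKAux.main hk2 hk h1 h2
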